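/- Given a double bracket {{−,−}} on an algebra R (of degree 0), the induced bracket {a,b} := μ({{a,b}}) (multiplication applied to the double bracket) descends to a well-defined skew-symmetric bracket on the commutator quotient R♮ = R/[R,R]; if moreover the double Jacobi identity holds, this bracket makes R♮ a Lie algebra. -/

import Mathlib

open TensorProduct

namespace Stmt5

variable (k R : Type*) [Field k] [Ring R] [Algebra k R]

/-- The cyclic permutation `σ₍₁₂₃₎ : b₁ ⊗ b₂ ⊗ b₃ ↦ b₃ ⊗ b₁ ⊗ b₂` on `R ⊗ R ⊗ R`. -/
noncomputable def cyc : R ⊗[k] (R ⊗[k] R) →ₗ[k] R ⊗[k] (R ⊗[k] R) :=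
  (TensorProduct.comm k (R ⊗[k] R) R).toLinearMap.comp
    (TensorProduct.assoc k R R R).symm.toLinearMap

/-- The left extension `{{a, b₁ ⊗ b₂}}_L = {{a, b₁}} ⊗ b₂` of a double bracket. -/
noncomputable def leftExt (B : R →ₗ[k] R →ₗ[k] R ⊗[k] R) (a : R) :
    R ⊗[k] R →ₗ[k] R ⊗[k] (R ⊗[k] R) :=
  (TensorProduct.assoc k R R R).toLinearMap.comp (LinearMap.rTensor R (B a))

/-- The induced bracket `{a, b} := μ ∘ {{a, b}}`. -/
noncomputable def br (B : R →ₗ[k] R →ₗ[k] R ⊗[k] R) (a b : R) : R :=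
  LinearMap.mul' k R (B a b)

/-- The span of commutators, so that `R♮ = R / [R, R]`. -/
def commSpace : Submodule k R :=
  Submodule.span k {z : R | ∃ x y : R, z = x * y - y * x}

lemma mem_comm (x y : R) : x * y - y * x ∈ commSpace k R :=
  Submodule.subset_span ⟨x, y, rfl⟩

lemma mul'_mulLeft (u : R) (t : R ⊗[k] R) :
    LinearMap.mul' k R ((u ⊗ₜ[k] (1 : R)) * t) = u * LinearMap.mul' k R t := by
  induction t using TensorProduct.induction_on with
  | zero => simp
  | tmul p q => simp [Algebra.TensorProduct.tmul_mul_tmul, mul_assoc]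
  | add s t hs ht => simp [mul_add, hs, ht]

lemma mul'_mulRight (v : R) (t : R ⊗[k] R) :
    LinearMap.mul' k R (t * ((1 : R) ⊗ₜ[k] v)) = LinearMap.mul' k R t * v := by
  induction t using TensorProduct.induction_on with
  | zero => simp
  | tmul p q => simp [Algebra.TensorProduct.tmul_mul_tmul, mul_assoc]
  | add s t hs ht => simp [add_mul, hs, ht]

lemma key1 (t : R ⊗[k] R) :
    LinearMap.mul' k R ((TensorProduct.comm k R R) t) - LinearMap.mul' k R t ∈ commSpace k R := by
  induction t using TensorProduct.induction_on with
  | zero => simp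
  | tmul x y => simpa using mem_comm k R y x
  | add s t hs ht =>
      have h := add_mem hs ht
      simp only [map_add]
      convert h using 1
      abel

noncomputable def tmul3mul : R ⊗[k] (R ⊗[k] R) →ₗ[k] R :=
  (LinearMap.mul' k R).comp (LinearMap.lTensor R (LinearMap.mul' k R))

@[simp] lemma tmul3mul_tmul (x y z : R) :
    tmul3mul k R (x ⊗ₜ[k] (y ⊗ₜ[k] z)) = x * (y * z) := by
  simp [tmul3mul]

@[simp] lemma cyc_tmul (x y z : R) :
    cyc k R (x ⊗ₜ[k] (y ⊗ₜ[k] z)) = z ⊗ₜ[k] (x ⊗ₜ[k] y) := by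
  simp [cyc]

lemma key2 (t : R ⊗[k] (R ⊗[k] R)) :
    tmul3mul k R (cyc k R t) - tmul3mul k R t ∈ commSpace k R := by
  induction t using TensorProduct.induction_on with
  | zero => simp
  | tmul x s =>
      induction s using TensorProduct.induction_on with
      | zero => simp
      | tmul y z =>
          simp only [cyc_tmul, tmul3mul_tmul]
          rw [← mul_assoc x y z]
          exact mem_comm k R z (x * y)
      | add s1 s2 h1 h2 =>
          have h := add_mem h1 h2
          simp only [tmul_add, map_add]
          convert h using 1
          abel
  | add s t hs ht =>
      have h := add_mem hs ht
      simp only [map_add]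
      convert h using 1
      abel

lemma tmul3mul_assoc (s : R ⊗[k] R) (v : R) :
    tmul3mul k R ((TensorProduct.assoc k R R R) (s ⊗ₜ[k] v)) =
      LinearMap.mul' k R s * v := by
  induction s using TensorProduct.induction_on with
  | zero =>
      rw [TensorProduct.zero_tmul, LinearEquiv.map_zero, map_zero, LinearMap.map_zero, zero_mul]
  | tmul p q => simp [mul_assoc]
  | add s1 s2 h1 h2 => rw [add_tmul, map_add, map_add, h1, h2, map_add, add_mul]

lemma tmul3mul_leftExt (B : R →ₗ[k] R →ₗ[k] R ⊗[k] R) (a u v : R) :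
    tmul3mul k R (leftExt k R B a (u ⊗ₜ[k] v)) =
      LinearMap.mul' k R (B a u) * v := by
  simpa [leftExt] using tmul3mul_assoc k R (B a u) v

/-- Given a double bracket `{{-,-}}` on an algebra `R` (degree `0`), the
induced bracket `{a, b} := μ({{a, b}})` descends to a well-defined skew-symmetric bracket on
the commutator quotient `R♮ = R/[R,R]`; if moreover the double Jacobi identity holds, this
bracket satisfies the Jacobi identity modulo commutators, i.e. makes `R♮` a Lie algebra. -/
theorem stmt5 (B : R →ₗ[k] R →ₗ[k] R ⊗[k] R)
    (hder : ∀ a x y : R,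
      B a (x * y) = (x ⊗ₜ[k] (1 : R)) * B a y + B a x * ((1 : R) ⊗ₜ[k] y))
    (hskew : ∀ a b : R, B a b = - (TensorProduct.comm k R R) (B b a)) :
    (∀ a a' b b' : R, a - a' ∈ commSpace k R → b - b' ∈ commSpace k R →
        br k R B a b - br k R B a' b' ∈ commSpace k R) ∧
    (∀ a b : R, br k R B a b + br k R B b a ∈ commSpace k R) ∧
    ((∀ a b c : R,
        leftExt k R B a (B b c)
          + cyc k R (leftExt k R B b (B c a))
          + cyc k R (cyc k R (leftExt k R B c (B a b))) = 0) →
      ∀ a b c : R,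
        br k R B a (br k R B b c) + br k R B b (br k R B c a)
          + br k R B c (br k R B a b) ∈ commSpace k R) := by
  set μ := LinearMap.mul' k R with hμ
  -- derivation property of the induced bracket
  have hderiv : ∀ a x y : R, μ (B a (x * y)) = x * μ (B a y) + μ (B a x) * y := by
    intro a x y
    rw [hder, map_add, mul'_mulLeft, mul'_mulRight]
  -- right slot maps commutators into commutators
  have hright : ∀ a : R, ∀ c ∈ commSpace k R, μ (B a c) ∈ commSpace k R := by
    intro a c hc
    induction hc using Submodule.span_induction with
    | mem z hz =>
        obtain ⟨x, y, rfl⟩ := hz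
        rw [map_sub, map_sub, hderiv, hderiv]
        have h := add_mem (mem_comm k R x (μ (B a y))) (mem_comm k R (μ (B a x)) y)
        convert h using 1
        abel
    | zero => simp
    | add u v _ _ hu hv =>
        rw [map_add, map_add]; exact add_mem hu hv
    | smul r u _ hu =>
        rw [map_smul, map_smul]; exact Submodule.smul_mem _ r hu
  -- left slot maps commutators into commutators
  have hleft : ∀ b : R, ∀ c ∈ commSpace k R, μ (B c b) ∈ commSpace k R := by
    intro b c hc
    rw [hskew c b, map_neg]
    refine neg_mem ?_
    have h1 := key1 k R (B b c)
    have h2 := hright b c hc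
    have := add_mem h1 h2
    simpa [hμ] using this
  refine ⟨?_, ?_, ?_⟩
  · intro a a' b b' ha hb
    have heq : br k R B a b - br k R B a' b' = μ (B (a - a') b) + μ (B a' (b - b')) := by
      simp only [br, map_sub, LinearMap.sub_apply, hμ]
      abel
    rw [heq]
    exact add_mem (hleft b _ ha) (hright a' _ hb)
  · intro a b
    have heq : br k R B a b + br k R B b a
        = -(μ ((TensorProduct.comm k R R) (B b a)) - μ (B b a)) := by
      simp only [br, hμ]
      rw [hskew a b, map_neg]
      abel
    rw [heq]
    exact neg_mem (key1 k R (B b a))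
  · intro hJ a b c
    -- comm of a bracket
    have hcomm : ∀ x y : R, (TensorProduct.comm k R R) (B x y) = -(B y x) := by
      intro x y
      have := hskew y x
      rw [this]; simp
    -- the mod-commutator derivation identity
    have derivmod : ∀ a t, μ (B a (μ t))
        - (tmul3mul k R (leftExt k R B a ((TensorProduct.comm k R R) t))
          + tmul3mul k R (leftExt k R B a t)) ∈ commSpace k R := by
      intro a t
      induction t using TensorProduct.induction_on with
      | zero => simp
      | tmul u v =>
          rw [TensorProduct.comm_tmul, tmul3mul_leftExt, tmul3mul_leftExt,
            LinearMap.mul'_apply, hderiv]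
          have h := mem_comm k R u (μ (B a v))
          convert h using 1
          abel
      | add s t hs ht =>
          have h := add_mem hs ht
          simp only [map_add]
          convert h using 1
          abel
    -- key: single Jacobi term identity mod commutators
    have key : ∀ x y z : R, br k R B x (br k R B y z)
        - (tmul3mul k R (leftExt k R B x (B y z))
          - tmul3mul k R (leftExt k R B x (B z y))) ∈ commSpace k R := by
      intro x y z
      have h := derivmod x (B y z)
      rw [hcomm y z, map_neg, map_neg] at h
      simp only [br, hμ]
      convert h using 1
      abel
    -- apply tmul3mul to the double Jacobi identities
    have hS : ∀ x y z : R,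
        tmul3mul k R (leftExt k R B x (B y z))
          + tmul3mul k R (leftExt k R B y (B z x))
          + tmul3mul k R (leftExt k R B z (B x y)) ∈ commSpace k R := by
      intro x y z
      have h0 : tmul3mul k R (leftExt k R B x (B y z))
          + tmul3mul k R (cyc k R (leftExt k R B y (B z x)))
          + tmul3mul k R (cyc k R (cyc k R (leftExt k R B z (B x y)))) = 0 := by
        have := congrArg (tmul3mul k R) (hJ x y z)
        simpa [map_add] using this
      have d1 := key2 k R (leftExt k R B y (B z x))
      have d2 := key2 k R (cyc k R (leftExt k R B z (B x y)))
      have d3 := key2 k R (leftExt k R B z (B x y))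
      have hmem := neg_mem (add_mem (add_mem d1 d2) d3)
      have heq : tmul3mul k R (leftExt k R B x (B y z))
          + tmul3mul k R (leftExt k R B y (B z x))
          + tmul3mul k R (leftExt k R B z (B x y))
          = -(((tmul3mul k R (cyc k R (leftExt k R B y (B z x)))
                - tmul3mul k R (leftExt k R B y (B z x)))
              + (tmul3mul k R (cyc k R (cyc k R (leftExt k R B z (B x y))))
                - tmul3mul k R (cyc k R (leftExt k R B z (B x y)))))
            + (tmul3mul k R (cyc k R (leftExt k R B z (B x y)))
                - tmul3mul k R (leftExt k R B z (B x y)))) := by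
        have : tmul3mul k R (leftExt k R B x (B y z))
            = -(tmul3mul k R (cyc k R (leftExt k R B y (B z x)))
              + tmul3mul k R (cyc k R (cyc k R (leftExt k R B z (B x y))))) := by
          rw [eq_neg_iff_add_eq_zero]
          rw [← h0]; abel
        rw [this]; abel
      rw [heq]
      exact hmem
    have h1 := key a b c
    have h2 := key b c a
    have h3 := key c a b
    have hS1 := hS a b c
    have hS2 := hS a c b
    have hK := add_mem (add_mem (add_mem h1 h2) h3) (sub_mem hS1 hS2)
    convert hK using 1
    abel

end Stmt5
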